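/- Let p ≥ q ≥ 1 be integers, π ∈ S_{p+q}, r a nonnegative integer, and f ∈ S_{p+q}. Let C^π = πG_{p,q}π⁻¹. Then d(f,g) > r for every g ∈ C^π if and only if at least one of the following holds: H = ⋃_{i∈H} A^{C^π}_{i→f(i)}, or R = ⋃_{i∈R} A^{C^π}_{i→f(i)}. -/

import Mathlib

open Equiv

/-- The ℓ∞-distance between two permutations of `Fin n`. -/
noncomputable def linfDist {n : ℕ} (f g : Perm (Fin n)) : ℕ :=
  Finset.univ.sup fun i : Fin n => (((f i).val : ℤ) - ((g i).val : ℤ)).natAbs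

/-- The distance from a permutation to a code `C`. -/
noncomputable def distToCode {n : ℕ} (f : Perm (Fin n)) (C : Set (Perm (Fin n))) : ℕ :=
  sInf (linfDist f '' C)

/-- The covering radius of a code `C ⊆ Sₙ`. -/
noncomputable def coveringRadius {n : ℕ} (C : Set (Perm (Fin n))) : ℕ :=
  sSup (Set.range fun f : Perm (Fin n) => distToCode f C)

/-- The relabeling `C^π = π C π⁻¹`. -/
def conjCode {n : ℕ} (π : Perm (Fin n)) (C : Set (Perm (Fin n))) : Set (Perm (Fin n)) :=
  (fun g => π * g * π⁻¹) '' C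

/-- Maximum covering radius over all relabelings. -/
noncomputable def Lmax {n : ℕ} (C : Set (Perm (Fin n))) : ℕ :=
  sSup (Set.range fun π : Perm (Fin n) => coveringRadius (conjCode π C))

/-- Minimum covering radius over all relabelings. -/
noncomputable def Lmin {n : ℕ} (C : Set (Perm (Fin n))) : ℕ :=
  sInf (Set.range fun π : Perm (Fin n) => coveringRadius (conjCode π C))

/-- The `(p,q)`-type group `G_{p,q} = ⟨(1,…,p), (p+1,…,p+q)⟩ ⊆ S_{p+q}`
(using `0`-indexed `Fin (p+q)`). -/
def Gpq (p q : ℕ) : Subgroup (Perm (Fin (p + q))) :=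
  Subgroup.closure
    { ((List.finRange p).map (Fin.castLE (Nat.le_add_right p q))).formPerm,
      ((List.finRange q).map (Fin.natAdd p)).formPerm }

/-- The transitive cyclic group `Gₙ = ⟨(1,2,…,n)⟩`. -/
def Gcyc (n : ℕ) : Subgroup (Perm (Fin n)) := Subgroup.closure {finRotate n}

/-- The natural dihedral group
`Dₙ = ⟨(1,2,…,n), ∏_{i=1}^{⌊n/2⌋} (i, n-i)⟩` (using `0`-indexed `Fin n`). -/
def Dn (n : ℕ) : Subgroup (Perm (Fin n)) :=
  Subgroup.closure
    { finRotate n,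
      (((List.finRange (n / 2)).map fun i =>
        Equiv.swap (⟨i.val, by have := i.isLt; omega⟩ : Fin n)
          (⟨n - 2 - i.val, by have := i.isLt; omega⟩ : Fin n)).prod) }

open Classical in
/-- For the relabeled code `C^π = π G_{p,q} π⁻¹`, the set `A^{C^π}_{i→j}`:
the set of `g⁻¹(π(1))` (resp. `g⁻¹(π(p+1))`) over all `g ∈ C^π` with `|g(i) - j| > r`,
according to whether `i ∈ H = {π(1),…,π(p)}` or `i ∈ R = {π(p+1),…,π(p+q)}`. -/
noncomputable def AsetRel (p q : ℕ) (hq : 0 < q) (π : Perm (Fin (p + q))) (r : ℕ)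
    (i j : Fin (p + q)) : Set (Fin (p + q)) :=
  if i ∈ π '' {x : Fin (p + q) | (x : ℕ) < p} then
    {x | ∃ g ∈ conjCode π (Gpq p q : Set (Perm (Fin (p + q)))),
      r < (((g i).val : ℤ) - ((j : ℕ) : ℤ)).natAbs ∧
      x = g⁻¹ (π ⟨0, i.pos⟩)}
  else
    {x | ∃ g ∈ conjCode π (Gpq p q : Set (Perm (Fin (p + q)))),
      r < (((g i).val : ℤ) - ((j : ℕ) : ℤ)).natAbs ∧
      x = g⁻¹ (π ⟨p, Nat.lt_add_of_pos_right hq⟩)}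


namespace Stmt15Aux

lemma natAbs_swap (a b : ℤ) : (a - b).natAbs = (b - a).natAbs := by
  rw [← Int.natAbs_neg, neg_sub]

variable {p q : ℕ} [NeZero p] [NeZero q]

noncomputable def φ (a : Fin p) (b : Fin q) : Perm (Fin (p + q)) :=
  finSumFinEquiv.permCongr (Equiv.sumCongr (Equiv.addLeft a) (Equiv.addLeft b))

lemma φ_castAdd (a : Fin p) (b : Fin q) (x : Fin p) :
    φ a b (Fin.castAdd q x) = Fin.castAdd q (a + x) := by
  simp [φ, Equiv.permCongr_apply]

lemma φ_natAdd (a : Fin p) (b : Fin q) (y : Fin q) :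
    φ a b (Fin.natAdd p y) = Fin.natAdd p (b + y) := by
  simp [φ, Equiv.permCongr_apply]

lemma φ_mul (a a' : Fin p) (b b' : Fin q) :
    φ a b * φ a' b' = φ (a + a') (b + b') := by
  ext i
  induction i using Fin.addCases with
  | left x => simp [Perm.mul_apply, φ_castAdd, add_assoc]
  | right y => simp [Perm.mul_apply, φ_natAdd, add_assoc]

lemma φ_one : φ (0 : Fin p) (0 : Fin q) = 1 := by
  ext i
  induction i using Fin.addCases with
  | left x => simp [φ_castAdd]
  | right y => simp [φ_natAdd]

lemma φ_inv (a : Fin p) (b : Fin q) : (φ a b)⁻¹ = φ (-a) (-b) := by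
  apply inv_eq_of_mul_eq_one_right
  rw [φ_mul, add_neg_cancel, add_neg_cancel, φ_one]

open Fin.NatCast in
lemma φ_pow_left (n : ℕ) : φ (1 : Fin p) (0 : Fin q) ^ n = φ (n : Fin p) 0 := by
  induction n with
  | zero => simp [φ_one]
  | succ k ih => rw [pow_succ, ih, φ_mul, add_zero]; push_cast; ring_nf

open Fin.NatCast in
lemma φ_pow_right (n : ℕ) : φ (0 : Fin p) (1 : Fin q) ^ n = φ 0 (n : Fin q) := by
  induction n with
  | zero => simp [φ_one]
  | succ k ih => rw [pow_succ, ih, φ_mul, add_zero]; push_cast; ring_nf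

omit [NeZero p] [NeZero q] in
lemma castAdd_inj : Function.Injective (Fin.castAdd q : Fin p → Fin (p + q)) :=
  fun u v huv => Fin.ext (by simpa using congrArg Fin.val huv)

omit [NeZero p] [NeZero q] in
lemma natAdd_inj : Function.Injective (Fin.natAdd p : Fin q → Fin (p + q)) := by
  intro u v huv
  have := congrArg Fin.val huv
  simp only [Fin.coe_natAdd] at this
  exact Fin.ext (by omega)

lemma s_eq :
    ((List.finRange p).map (Fin.castLE (Nat.le_add_right p q))).formPerm
      = φ (1 : Fin p) (0 : Fin q) := by
  set l := (List.finRange p).map (Fin.castLE (Nat.le_add_right p q)) with hl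
  have hnd : l.Nodup := (List.nodup_finRange p).map (Fin.castLE_injective _)
  have hlen : l.length = p := by simp [hl]
  refine Equiv.ext fun i => ?_
  induction i using Fin.addCases with
  | left x =>
    have hlpos : 0 < l.length := by rw [hlen]; exact x.pos
    have hx : Fin.castAdd q x = l[x.val]'(by rw [hlen]; exact x.isLt) := by
      simp [hl]
      rfl
    have h1 : l.formPerm (Fin.castAdd q x)
        = l[(x.val + 1) % l.length]'(Nat.mod_lt _ hlpos) := by
      conv_lhs => rw [hx]
      exact List.formPerm_apply_getElem l hnd x.val _
    rw [h1, φ_castAdd]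
    have h2 : l[(x.val + 1) % l.length]'(Nat.mod_lt _ hlpos)
        = Fin.castLE (Nat.le_add_right p q) ⟨(x.val + 1) % p, Nat.mod_lt _ x.pos⟩ := by
      simp [hl, hlen]
    rw [h2]
    apply Fin.ext
    show (x.val + 1) % p = ((1 : Fin p) + x).val
    rw [Fin.add_def]
    show (x.val + 1) % p = (1 % p + x.val) % p
    rw [Nat.mod_add_mod, Nat.add_comm]
  | right y =>
    rw [List.formPerm_apply_of_notMem, φ_natAdd, zero_add]
    intro hmem
    rw [hl, List.mem_map] at hmem
    obtain ⟨j, -, hj⟩ := hmem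
    have := congrArg Fin.val hj
    simp at this
    omega

lemma t_eq :
    ((List.finRange q).map (Fin.natAdd p)).formPerm = φ (0 : Fin p) (1 : Fin q) := by
  set l := (List.finRange q).map (Fin.natAdd p) with hl
  have hnd : l.Nodup := (List.nodup_finRange q).map natAdd_inj
  have hlen : l.length = q := by simp [hl]
  refine Equiv.ext fun i => ?_
  induction i using Fin.addCases with
  | left x =>
    rw [List.formPerm_apply_of_notMem, φ_castAdd, zero_add]
    intro hmem
    rw [hl, List.mem_map] at hmem
    obtain ⟨j, -, hj⟩ := hmem
    have := congrArg Fin.val hj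
    simp at this
    omega
  | right y =>
    have hlpos : 0 < l.length := by rw [hlen]; exact y.pos
    have hy : Fin.natAdd p y = l[y.val]'(by rw [hlen]; exact y.isLt) := by
      simp [hl]
    have h1 : l.formPerm (Fin.natAdd p y)
        = l[(y.val + 1) % l.length]'(Nat.mod_lt _ hlpos) := by
      conv_lhs => rw [hy]
      exact List.formPerm_apply_getElem l hnd y.val _
    rw [h1, φ_natAdd]
    have h2 : l[(y.val + 1) % l.length]'(Nat.mod_lt _ hlpos)
        = Fin.natAdd p ⟨(y.val + 1) % q, Nat.mod_lt _ y.pos⟩ := by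
      simp [hl, hlen]
    rw [h2]
    apply Fin.ext
    show p + (y.val + 1) % q = p + ((1 : Fin q) + y).val
    rw [Fin.add_def]
    show p + (y.val + 1) % q = p + (1 % q + y.val) % q
    rw [Nat.mod_add_mod, Nat.add_comm 1 y.val]

open Fin.NatCast in
lemma mem_Gpq (g : Perm (Fin (p + q))) :
    g ∈ Gpq p q ↔ ∃ (a : Fin p) (b : Fin q), g = φ a b := by
  constructor
  · intro hg
    induction hg using Subgroup.closure_induction with
    | mem x hx =>
      rcases hx with hx | hx
      · exact ⟨1, 0, by rw [hx, s_eq]⟩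
      · rw [Set.mem_singleton_iff] at hx
        exact ⟨0, 1, by rw [hx, t_eq]⟩
    | one => exact ⟨0, 0, φ_one.symm⟩
    | mul x y hx hy ihx ihy =>
      obtain ⟨a, b, rfl⟩ := ihx
      obtain ⟨a', b', rfl⟩ := ihy
      exact ⟨a + a', b + b', φ_mul a a' b b'⟩
    | inv x hx ihx =>
      obtain ⟨a, b, rfl⟩ := ihx
      exact ⟨-a, -b, φ_inv a b⟩
  · rintro ⟨a, b, rfl⟩
    have h1 : φ a b = φ (1 : Fin p) 0 ^ a.val * φ (0 : Fin p) (1 : Fin q) ^ b.val := by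
      rw [φ_pow_left, φ_pow_right, φ_mul, Fin.cast_val_eq_self, Fin.cast_val_eq_self,
        add_zero, zero_add]
    rw [h1]
    exact Subgroup.mul_mem _
      (Subgroup.pow_mem _ (Subgroup.subset_closure (by rw [s_eq]; left; rfl)) _)
      (Subgroup.pow_mem _ (Subgroup.subset_closure (by rw [t_eq]; right; rfl)) _)

end Stmt15Aux


open Stmt15Aux in
theorem stmt_15 (p q : ℕ) (hq : 1 ≤ q) (hpq : q ≤ p) (π : Perm (Fin (p + q))) (r : ℕ)
    (f : Perm (Fin (p + q))) :
    (∀ g ∈ conjCode π (Gpq p q : Set (Perm (Fin (p + q)))), r < linfDist f g) ↔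
      (π '' {x : Fin (p + q) | (x : ℕ) < p} =
        ⋃ i ∈ π '' {x : Fin (p + q) | (x : ℕ) < p}, AsetRel p q hq π r i (f i)) ∨
      (π '' {x : Fin (p + q) | p ≤ (x : ℕ)} =
        ⋃ i ∈ π '' {x : Fin (p + q) | p ≤ (x : ℕ)}, AsetRel p q hq π r i (f i)) := by
  haveI : NeZero q := ⟨by omega⟩
  haveI : NeZero p := ⟨by omega⟩
  -- membership in the conjugated code
  have memC : ∀ g : Perm (Fin (p + q)),
      g ∈ conjCode π (Gpq p q : Set (Perm (Fin (p + q)))) ↔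
        ∃ (a : Fin p) (b : Fin q), g = π * φ a b * π⁻¹ := by
    intro g
    simp only [conjCode, Set.mem_image, SetLike.mem_coe]
    constructor
    · rintro ⟨g₀, hg₀, rfl⟩
      obtain ⟨a, b, rfl⟩ := (mem_Gpq g₀).1 hg₀
      exact ⟨a, b, rfl⟩
    · rintro ⟨a, b, rfl⟩
      exact ⟨_, (mem_Gpq _).2 ⟨a, b, rfl⟩, rfl⟩
  -- how conjugated elements act
  have capp : ∀ (a : Fin p) (b : Fin q) (x : Fin p),
      (π * φ a b * π⁻¹) (π (Fin.castAdd q x)) = π (Fin.castAdd q (a + x)) := by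
    intro a b x; simp [Perm.mul_apply, φ_castAdd]
  have capp' : ∀ (a : Fin p) (b : Fin q) (y : Fin q),
      (π * φ a b * π⁻¹) (π (Fin.natAdd p y)) = π (Fin.natAdd p (b + y)) := by
    intro a b y; simp [Perm.mul_apply, φ_natAdd]
  have h0eq : ∀ h0 : 0 < p + q, (⟨0, h0⟩ : Fin (p + q)) = Fin.castAdd q (0 : Fin p) := by
    intro h0; apply Fin.ext; simp
  have hpeq : ∀ hp : p < p + q, (⟨p, hp⟩ : Fin (p + q)) = Fin.natAdd p (0 : Fin q) := by
    intro hp; apply Fin.ext; simp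
  have cinv0 : ∀ (a : Fin p) (b : Fin q),
      (π * φ a b * π⁻¹)⁻¹ (π (Fin.castAdd q (0 : Fin p))) = π (Fin.castAdd q (-a)) := by
    intro a b
    simp [mul_inv_rev, φ_inv, Perm.mul_apply, φ_castAdd]
  have cinvp : ∀ (a : Fin p) (b : Fin q),
      (π * φ a b * π⁻¹)⁻¹ (π (Fin.natAdd p (0 : Fin q))) = π (Fin.natAdd p (-b)) := by
    intro a b
    simp [mul_inv_rev, φ_inv, Perm.mul_apply, φ_natAdd]
  -- membership in H and R
  have memH : ∀ i : Fin (p + q),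
      i ∈ π '' {x : Fin (p + q) | (x : ℕ) < p} ↔ ∃ x : Fin p, i = π (Fin.castAdd q x) := by
    intro i
    constructor
    · rintro ⟨x0, hx0, rfl⟩
      refine ⟨⟨x0.val, hx0⟩, ?_⟩
      congr 1
    · rintro ⟨x, rfl⟩
      exact ⟨Fin.castAdd q x, by simp, rfl⟩
  have memR : ∀ i : Fin (p + q),
      i ∈ π '' {x : Fin (p + q) | p ≤ (x : ℕ)} ↔ ∃ y : Fin q, i = π (Fin.natAdd p y) := by
    intro i
    constructor
    · rintro ⟨x0, hx0, rfl⟩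
      have hx0' : p ≤ x0.val := hx0
      refine ⟨⟨x0.val - p, by omega⟩, ?_⟩
      congr 1
      apply Fin.ext
      simp only [Fin.coe_natAdd]
      omega
    · rintro ⟨y, rfl⟩
      exact ⟨Fin.natAdd p y, by simp, rfl⟩
  -- the A-sets
  have hA_H : ∀ (x : Fin p) (h : Fin (p + q)),
      h ∈ AsetRel p q hq π r (π (Fin.castAdd q x)) (f (π (Fin.castAdd q x))) ↔
        ∃ a : Fin p,
          (r < (((π (Fin.castAdd q (a + x))).val : ℤ)
            - ((f (π (Fin.castAdd q x))).val : ℤ)).natAbs)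
          ∧ h = π (Fin.castAdd q (-a)) := by
    intro x h
    have hi : π (Fin.castAdd q x) ∈ π '' {x : Fin (p + q) | (x : ℕ) < p} :=
      (memH _).2 ⟨x, rfl⟩
    unfold AsetRel
    rw [if_pos hi]
    simp only [Set.mem_setOf_eq]
    constructor
    · rintro ⟨g, hg, hlt, rfl⟩
      obtain ⟨a, b, rfl⟩ := (memC g).1 hg
      rw [capp] at hlt
      refine ⟨a, hlt, ?_⟩
      rw [h0eq, cinv0]
    · rintro ⟨a, hlt, rfl⟩
      refine ⟨π * φ a 0 * π⁻¹, (memC _).2 ⟨a, 0, rfl⟩, ?_, ?_⟩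
      · rw [capp]; exact hlt
      · rw [h0eq, cinv0]
  have hA_R : ∀ (y : Fin q) (h : Fin (p + q)),
      h ∈ AsetRel p q hq π r (π (Fin.natAdd p y)) (f (π (Fin.natAdd p y))) ↔
        ∃ b : Fin q,
          (r < (((π (Fin.natAdd p (b + y))).val : ℤ)
            - ((f (π (Fin.natAdd p y))).val : ℤ)).natAbs)
          ∧ h = π (Fin.natAdd p (-b)) := by
    intro y h
    have hi : π (Fin.natAdd p y) ∉ π '' {x : Fin (p + q) | (x : ℕ) < p} := by
      intro hmem
      obtain ⟨x, hx⟩ := (memH _).1 hmem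
      have := congrArg Fin.val (π.injective hx)
      simp only [Fin.coe_natAdd, Fin.coe_castAdd] at this
      have := x.isLt
      omega
    unfold AsetRel
    rw [if_neg hi]
    simp only [Set.mem_setOf_eq]
    constructor
    · rintro ⟨g, hg, hlt, rfl⟩
      obtain ⟨a, b, rfl⟩ := (memC g).1 hg
      rw [capp'] at hlt
      refine ⟨b, hlt, ?_⟩
      rw [hpeq, cinvp]
    · rintro ⟨b, hlt, rfl⟩
      refine ⟨π * φ 0 b * π⁻¹, (memC _).2 ⟨0, b, rfl⟩, ?_, ?_⟩
      · rw [capp']; exact hlt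
      · rw [hpeq, cinvp]
  -- characterization of the H-union equality
  have hUnionH :
      (π '' {x : Fin (p + q) | (x : ℕ) < p} =
        ⋃ i ∈ π '' {x : Fin (p + q) | (x : ℕ) < p}, AsetRel p q hq π r i (f i)) ↔
      ∀ a : Fin p, ∃ x : Fin p,
        r < (((π (Fin.castAdd q (a + x))).val : ℤ)
          - ((f (π (Fin.castAdd q x))).val : ℤ)).natAbs := by
    constructor
    · intro hEq a
      have hmem : π (Fin.castAdd q (-a)) ∈
          ⋃ i ∈ π '' {x : Fin (p + q) | (x : ℕ) < p}, AsetRel p q hq π r i (f i) := by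
        rw [← hEq]; exact (memH _).2 ⟨-a, rfl⟩
      simp only [Set.mem_iUnion, exists_prop] at hmem
      obtain ⟨i, hi, hA⟩ := hmem
      obtain ⟨x, rfl⟩ := (memH i).1 hi
      obtain ⟨a', hlt, heq⟩ := (hA_H x _).1 hA
      have ha : a' = a := by
        have := castAdd_inj (π.injective heq)
        exact neg_injective this.symm
      subst ha
      exact ⟨x, hlt⟩
    · intro hK
      apply Set.Subset.antisymm
      · intro h hh
        obtain ⟨c, rfl⟩ := (memH h).1 hh
        obtain ⟨x, hx⟩ := hK (-c)
        simp only [Set.mem_iUnion, exists_prop]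
        exact ⟨π (Fin.castAdd q x), (memH _).2 ⟨x, rfl⟩,
          (hA_H x _).2 ⟨-c, hx, by rw [neg_neg]⟩⟩
      · intro h hh
        simp only [Set.mem_iUnion, exists_prop] at hh
        obtain ⟨i, hi, hA⟩ := hh
        obtain ⟨x, rfl⟩ := (memH i).1 hi
        obtain ⟨a, -, rfl⟩ := (hA_H x _).1 hA
        exact (memH _).2 ⟨-a, rfl⟩
  -- characterization of the R-union equality
  have hUnionR :
      (π '' {x : Fin (p + q) | p ≤ (x : ℕ)} =
        ⋃ i ∈ π '' {x : Fin (p + q) | p ≤ (x : ℕ)}, AsetRel p q hq π r i (f i)) ↔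
      ∀ b : Fin q, ∃ y : Fin q,
        r < (((π (Fin.natAdd p (b + y))).val : ℤ)
          - ((f (π (Fin.natAdd p y))).val : ℤ)).natAbs := by
    constructor
    · intro hEq b
      have hmem : π (Fin.natAdd p (-b)) ∈
          ⋃ i ∈ π '' {x : Fin (p + q) | p ≤ (x : ℕ)}, AsetRel p q hq π r i (f i) := by
        rw [← hEq]; exact (memR _).2 ⟨-b, rfl⟩
      simp only [Set.mem_iUnion, exists_prop] at hmem
      obtain ⟨i, hi, hA⟩ := hmem
      obtain ⟨y, rfl⟩ := (memR i).1 hi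
      obtain ⟨b', hlt, heq⟩ := (hA_R y _).1 hA
      have hb : b' = b := by
        have := natAdd_inj (π.injective heq)
        exact neg_injective this.symm
      subst hb
      exact ⟨y, hlt⟩
    · intro hK
      apply Set.Subset.antisymm
      · intro h hh
        obtain ⟨c, rfl⟩ := (memR h).1 hh
        obtain ⟨y, hy⟩ := hK (-c)
        simp only [Set.mem_iUnion, exists_prop]
        exact ⟨π (Fin.natAdd p y), (memR _).2 ⟨y, rfl⟩,
          (hA_R y _).2 ⟨-c, hy, by rw [neg_neg]⟩⟩
      · intro h hh
        simp only [Set.mem_iUnion, exists_prop] at hh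
        obtain ⟨i, hi, hA⟩ := hh
        obtain ⟨y, rfl⟩ := (memR i).1 hi
        obtain ⟨b, -, rfl⟩ := (hA_R y _).1 hA
        exact (memR _).2 ⟨-b, rfl⟩
  -- characterization of being r-exposed
  have hExp : (∀ g ∈ conjCode π (Gpq p q : Set (Perm (Fin (p + q)))), r < linfDist f g) ↔
      ∀ (a : Fin p) (b : Fin q),
        (∃ x : Fin p,
          r < (((π (Fin.castAdd q (a + x))).val : ℤ)
            - ((f (π (Fin.castAdd q x))).val : ℤ)).natAbs) ∨
        (∃ y : Fin q,
          r < (((π (Fin.natAdd p (b + y))).val : ℤ)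
            - ((f (π (Fin.natAdd p y))).val : ℤ)).natAbs) := by
    constructor
    · intro hg a b
      have hd := hg _ ((memC _).2 ⟨a, b, rfl⟩)
      rw [linfDist, Finset.lt_sup_iff] at hd
      obtain ⟨i, -, hi⟩ := hd
      obtain ⟨z, rfl⟩ : ∃ z : Fin p ⊕ Fin q, i = π (finSumFinEquiv z) :=
        ⟨finSumFinEquiv.symm (π⁻¹ i), by simp⟩
      cases z with
      | inl x =>
        left
        rw [finSumFinEquiv_apply_left] at hi
        rw [capp a b x] at hi
        exact ⟨x, by rw [natAbs_swap]; exact hi⟩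
      | inr y =>
        right
        rw [finSumFinEquiv_apply_right] at hi
        rw [capp' a b y] at hi
        exact ⟨y, by rw [natAbs_swap]; exact hi⟩
    · intro hK g hg
      obtain ⟨a, b, rfl⟩ := (memC g).1 hg
      rw [linfDist, Finset.lt_sup_iff]
      rcases hK a b with ⟨x, hx⟩ | ⟨y, hy⟩
      · exact ⟨π (Fin.castAdd q x), Finset.mem_univ _,
          by rw [capp a b x, natAbs_swap]; exact hx⟩
      · exact ⟨π (Fin.natAdd p y), Finset.mem_univ _,
          by rw [capp' a b y, natAbs_swap]; exact hy⟩
  rw [hExp]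
  constructor
  · intro hK
    by_contra hc
    rcases not_or.1 hc with ⟨h1, h2⟩
    obtain ⟨a, ha⟩ := not_forall.1 (mt hUnionH.2 h1)
    obtain ⟨b, hb⟩ := not_forall.1 (mt hUnionR.2 h2)
    rcases hK a b with h | h
    · exact ha h
    · exact hb h
  · rintro (h | h) a b
    · exact Or.inl (hUnionH.1 h a)
    · exact Or.inr (hUnionR.1 h b)
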